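/- arXiv:math/0612632 — 2 statements merged into one kernel-verified Lean document; each statement's English description precedes it below -/
import Mathlib

section
/- Let G be a non-abelian CSA group. Then every finite-index subgroup of G is a non-abelian CSA group; in particular, G has no abelian subgroup of finite index. -/
universe u

/-- A group is *CSA* if every maximal abelian subgroup `A` is malnormal:
for every `g ∉ A`, `A ⊓ gAg⁻¹ = ⊥`. -/
def IsCSA (G : Type u) [Group G] : Prop :=
  ∀ A : Subgroup G, Maximal (fun K : Subgroup G => IsMulCommutative K) A →
    ∀ g : G, g ∉ A → A ⊓ Subgroup.map (MulAut.conj g).toMonoidHom A = ⊥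

open Subgroup

section Aux

variable {G : Type u} [Group G]

lemma isComm_iff (A : Subgroup G) :
    IsMulCommutative A ↔ ∀ a ∈ A, ∀ b ∈ A, a * b = b * a := by
  constructor
  · intro h a ha b hb
    haveI := h
    exact setLike_mul_comm (s := A) ha hb
  · intro h
    exact ⟨⟨fun a b => Subtype.ext (h a a.2 b b.2)⟩⟩

/-- Zorn: every commutative subgroup is contained in a maximal commutative subgroup. -/
lemma exists_maximal_comm (B : Subgroup G) (hB : IsMulCommutative B) :
    ∃ A : Subgroup G, B ≤ A ∧ Maximal (fun K : Subgroup G => IsMulCommutative K) A := by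
  obtain ⟨A, hBA, hmax⟩ := zorn_le_nonempty₀ {A : Subgroup G | IsMulCommutative A}
    (fun c hcs hchain y hy => by
      refine ⟨sSup c, ?_, fun z hz => le_sSup hz⟩
      rw [Set.mem_setOf_eq, isComm_iff]
      intro a ha b hb
      rw [Subgroup.mem_sSup_of_directedOn ⟨y, hy⟩ hchain.directedOn] at ha hb
      obtain ⟨A1, hA1, haA1⟩ := ha
      obtain ⟨A2, hA2, hbA2⟩ := hb
      rcases hchain.total hA1 hA2 with h | h
      · haveI : IsMulCommutative A2 := hcs hA2
        exact setLike_mul_comm (s := A2) (h haA1) hbA2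
      · haveI : IsMulCommutative A1 := hcs hA1
        exact setLike_mul_comm (s := A1) haA1 (h hbA2)) B hB
  exact ⟨A, hBA, hmax⟩

lemma mem_conj_iff {A : Subgroup G} {g x : G} :
    x ∈ Subgroup.map (MulAut.conj g).toMonoidHom A ↔ g⁻¹ * x * g ∈ A := by
  simp only [Subgroup.mem_map, MulEquiv.coe_toMonoidHom, MulAut.conj_apply]
  constructor
  · rintro ⟨a, ha, rfl⟩
    have : g⁻¹ * (g * a * g⁻¹) * g = a := by group
    rwa [this]
  · intro h
    exact ⟨g⁻¹ * x * g, h, by group⟩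

lemma conj_map_conj (h g : G) (A : Subgroup G) :
    Subgroup.map (MulAut.conj h).toMonoidHom (Subgroup.map (MulAut.conj g).toMonoidHom A)
      = Subgroup.map (MulAut.conj (h * g)).toMonoidHom A := by
  rw [Subgroup.map_map]
  congr 1
  ext x
  simp [MulAut.conj, mul_assoc]

lemma map_conj_one (A : Subgroup G) :
    Subgroup.map (MulAut.conj (1 : G)).toMonoidHom A = A := by
  ext x
  simp [mem_conj_iff]

/-- Conjugation preserves maximal commutativity. -/
lemma maximal_comm_conj {A : Subgroup G} (hA : Maximal (fun K : Subgroup G => IsMulCommutative K) A) (g : G) :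
    Maximal (fun K : Subgroup G => IsMulCommutative K) (Subgroup.map (MulAut.conj g).toMonoidHom A) := by
  constructor
  · haveI := hA.prop
    exact Subgroup.map_isMulCommutative A _
  · intro B hB hle
    have h1 : A ≤ Subgroup.map (MulAut.conj g⁻¹).toMonoidHom B := by
      have := Subgroup.map_mono (f := (MulAut.conj g⁻¹).toMonoidHom) hle
      rwa [conj_map_conj, inv_mul_cancel, map_conj_one] at this
    have h2 : Subgroup.map (MulAut.conj g⁻¹).toMonoidHom B ≤ A := by
      haveI := hB
      exact hA.le_of_ge (Subgroup.map_isMulCommutative B _) h1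
    have := Subgroup.map_mono (f := (MulAut.conj g).toMonoidHom) h2
    rwa [conj_map_conj, mul_inv_cancel, map_conj_one] at this

/-- Distinct maximal commutative subgroups of a CSA group meet trivially. -/
lemma maximal_comm_eq_of_mem (hcsa : IsCSA G) {A B : Subgroup G}
    (hA : Maximal (fun K : Subgroup G => IsMulCommutative K) A) (hB : Maximal (fun K : Subgroup G => IsMulCommutative K) B)
    {x : G} (hx : x ≠ 1) (hxA : x ∈ A) (hxB : x ∈ B) : A = B := by
  have hBA : B ≤ A := by
    intro g hg
    by_contra hgA
    have hbot := hcsa A hA g hgA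
    have hcomm : g * x = x * g := by
      haveI := hB.prop
      exact setLike_mul_comm (s := B) hg hxB
    have hxconj : x ∈ Subgroup.map (MulAut.conj g).toMonoidHom A := by
      rw [mem_conj_iff]
      have : g⁻¹ * x * g = x := by
        rw [mul_assoc, ← hcomm, ← mul_assoc, inv_mul_cancel, one_mul]
      rwa [this]
    have : x ∈ A ⊓ Subgroup.map (MulAut.conj g).toMonoidHom A := ⟨hxA, hxconj⟩
    rw [hbot, Subgroup.mem_bot] at this
    exact hx this
  exact le_antisymm (hB.le_of_ge hA.prop hBA) hBA

/-- The union of all conjugates of `A`. -/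
def US (A : Subgroup G) : Set G :=
  {x | ∃ g : G, x ∈ Subgroup.map (MulAut.conj g).toMonoidHom A}

lemma card_sub_one (α : Type*) [Finite α] (x : α) :
    Nat.card {y : α // y ≠ x} = Nat.card α - 1 := by
  have h1 : Nat.card {y : α // y ≠ x} = (({x} : Set α)ᶜ).ncard := by
    rw [← Nat.card_coe_set_eq]
    exact Nat.card_congr (Equiv.subtypeEquivRight (by simp))
  have h2 := Set.ncard_add_ncard_compl ({x} : Set α)
  rw [Set.ncard_singleton] at h2
  rw [h1]
  have h3 : 1 ≤ Nat.card α := by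
    have : Nonempty α := ⟨x⟩
    have := Nat.card_pos (α := α)
    omega
  omega

/-- The key counting bijection. -/
lemma card_US [Finite G] (hcsa : IsCSA G) {A : Subgroup G} (hA : Maximal (fun K : Subgroup G => IsMulCommutative K) A) :
    Nat.card {x : G // x ∈ US A ∧ x ≠ 1} = A.index * (Nat.card A - 1) := by
  haveI := hA.prop
  have key : ∀ (g1 g2 : G) (a : G), a ∈ A → g1 * a * g1⁻¹ ≠ 1 →
      ∀ b ∈ A, g1 * a * g1⁻¹ = g2 * b * g2⁻¹ → g1⁻¹ * g2 ∈ A := by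
    intro g1 g2 a ha hne b hb heq
    by_contra hg
    have hbot := hcsa A hA (g1⁻¹ * g2) hg
    have h2 : a ∈ Subgroup.map (MulAut.conj (g1⁻¹ * g2)).toMonoidHom A := by
      rw [mem_conj_iff]
      have : (g1⁻¹ * g2)⁻¹ * a * (g1⁻¹ * g2) = b := by
        have := congrArg (fun y => g2⁻¹ * y * g2) heq
        simp only [mul_assoc] at this ⊢
        group at this ⊢
        rw [this]
      rwa [this]
    have : a ∈ A ⊓ Subgroup.map (MulAut.conj (g1⁻¹ * g2)).toMonoidHom A := ⟨ha, h2⟩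
    rw [hbot, Subgroup.mem_bot] at this
    apply hne
    rw [this, mul_one, mul_inv_cancel]
  let f : (G ⧸ A) × {a : A // a ≠ 1} → {x : G // x ∈ US A ∧ x ≠ 1} := fun p =>
    ⟨p.1.out * (p.2.1 : G) * p.1.out⁻¹,
      ⟨p.1.out, by
        rw [mem_conj_iff]
        have : p.1.out⁻¹ * (p.1.out * (p.2.1 : G) * p.1.out⁻¹) * p.1.out = (p.2.1 : G) := by group
        rw [this]; exact p.2.1.2⟩,
      by
        intro h
        apply p.2.2
        have : (p.2.1 : G) = 1 := by
          have := congrArg (fun y => p.1.out⁻¹ * y * p.1.out) h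
          group at this
          simpa using this
        exact Subtype.ext this⟩
  have hbij : Function.Bijective f := by
    constructor
    · rintro ⟨q1, a1⟩ ⟨q2, a2⟩ h
      simp only [f, Subtype.mk.injEq] at h
      have hne : q1.out * (a1.1 : G) * q1.out⁻¹ ≠ 1 := by
        intro h1
        apply a1.2
        have : (a1.1 : G) = 1 := by
          have := congrArg (fun y => q1.out⁻¹ * y * q1.out) h1
          group at this
          simpa using this
        exact Subtype.ext this
      have hmem := key q1.out q2.out (a1.1 : G) a1.1.2 hne (a2.1 : G) a2.1.2 h
      have hq : q1 = q2 := by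
        rw [← QuotientGroup.out_eq' q1, ← QuotientGroup.out_eq' q2]
        exact QuotientGroup.eq.mpr hmem
      subst hq
      have : (a1.1 : G) = (a2.1 : G) := by
        have h2 := h
        apply mul_left_cancel (a := q1.out)
        apply mul_right_cancel (b := q1.out⁻¹)
        simpa [mul_assoc] using h2
      ext
      · rfl
      · exact this
    · rintro ⟨x, ⟨g, hg⟩, hx1⟩
      rw [mem_conj_iff] at hg
      set q : G ⧸ A := QuotientGroup.mk g with hq
      have hgg : q.out⁻¹ * g ∈ A := by
        rw [← QuotientGroup.eq]
        exact QuotientGroup.out_eq' q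
      have hb : q.out⁻¹ * x * q.out ∈ A := by
        have : q.out⁻¹ * x * q.out
            = (q.out⁻¹ * g) * (g⁻¹ * x * g) * (q.out⁻¹ * g)⁻¹ := by group
        rw [this]
        exact mul_mem (mul_mem hgg hg) (inv_mem hgg)
      have hbne : (⟨q.out⁻¹ * x * q.out, hb⟩ : A) ≠ 1 := by
        intro h
        apply hx1
        have h2 : q.out⁻¹ * x * q.out = 1 := congrArg Subtype.val h
        have := congrArg (fun y => q.out * y * q.out⁻¹) h2
        group at this
        simpa using this
      refine ⟨⟨q, ⟨⟨q.out⁻¹ * x * q.out, hb⟩, hbne⟩⟩, ?_⟩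
      apply Subtype.ext
      simp only [f]
      group
  rw [← Nat.card_congr (Equiv.ofBijective f hbij), Nat.card_prod, card_sub_one A 1]
  rfl

end Aux

section FiniteCase

variable {G : Type u} [Group G]

/-- A finite CSA group is abelian. -/
lemma finite_csa_comm [Finite G] (hcsa : IsCSA G) (a b : G) : a * b = b * a := by
  by_contra hab
  have ha1 : a ≠ 1 := fun h => hab (by rw [h, one_mul, mul_one])
  set n := Nat.card G with hn
  -- maximal abelian subgroup containing a
  obtain ⟨A, hAa, hA⟩ := exists_maximal_comm (Subgroup.zpowers a) (Subgroup.zpowers_isMulCommutative a)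
  have haA : a ∈ A := hAa (Subgroup.mem_zpowers a)
  have hAtop : A ≠ ⊤ := by
    intro h
    apply hab
    haveI := hA.prop
    have h1 : a ∈ A := by rw [h]; exact Subgroup.mem_top a
    have h2 : b ∈ A := by rw [h]; exact Subgroup.mem_top b
    exact setLike_mul_comm (s := A) h1 h2
  -- basic numerology for a nontrivial proper maximal abelian subgroup
  have numer : ∀ (C : Subgroup G), Maximal (fun K : Subgroup G => IsMulCommutative K) C → (∃ y ∈ C, y ≠ 1) →
      ({x : G | x ∈ US C ∧ x ≠ 1}.ncard = n - C.index ∧ 2 * C.index ≤ n ∧ 1 ≤ C.index) := by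
    intro C hC ⟨y, hyC, hy1⟩
    have hcard := card_US hcsa hC
    haveI : C.FiniteIndex := inferInstance
    have hCind : C.index ≠ 0 := Subgroup.FiniteIndex.index_ne_zero
    have hCn : Nat.card C * C.index = n := Subgroup.card_mul_index C
    have hC2 : 2 ≤ Nat.card C := by
      haveI : Finite C := Subtype.finite
      have hnt : Nontrivial C :=
        ⟨⟨⟨y, hyC⟩, 1, fun h => hy1 (by simpa using congrArg Subtype.val h)⟩⟩
      exact Finite.one_lt_card_iff_nontrivial.mpr hnt
    have hval : {x : G | x ∈ US C ∧ x ≠ 1}.ncard = C.index * (Nat.card C - 1) := by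
      rw [← Nat.card_coe_set_eq]
      rw [← hcard]
      apply Nat.card_congr
      exact Equiv.refl _
    obtain ⟨d, hd⟩ : ∃ d, Nat.card C = d + 1 := ⟨Nat.card C - 1, by omega⟩
    rw [hd] at hCn hC2
    rw [hval, hd]
    simp only [Nat.add_sub_cancel]
    constructor
    · have : n = C.index * d + C.index := by rw [← hCn]; ring
      omega
    constructor
    · have : n = C.index * d + C.index := by rw [← hCn]; ring
      have hd1 : 1 ≤ d := by omega
      have : C.index * 1 ≤ C.index * d := Nat.mul_le_mul_left _ hd1
      omega
    · omega
  obtain ⟨hcardA, hA2, hAi1⟩ := numer A hA ⟨a, haA, ha1⟩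
  haveI : A.FiniteIndex := inferInstance
  have hAi2 : 2 ≤ A.index := by
    have h0 : A.index ≠ 0 := Subgroup.FiniteIndex.index_ne_zero
    have h1 : A.index ≠ 1 := fun h => hAtop (Subgroup.index_eq_one.mp h)
    omega
  -- there is a nontrivial element outside all conjugates of A
  have hxex : ∃ x : G, x ∉ US A ∧ x ≠ 1 := by
    by_contra hc
    push_neg at hc
    have hcover : (Set.univ : Set G) ⊆ {x : G | x ∈ US A ∧ x ≠ 1} ∪ {1} := by
      intro x _
      rw [Set.mem_union, Set.mem_singleton_iff]
      by_cases hx : x ∈ US A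
      · by_cases hx1 : x = 1
        · right; exact hx1
        · left; exact ⟨hx, hx1⟩
      · right; exact hc x hx
    have hle : n ≤ (n - A.index) + 1 := by
      calc n = (Set.univ : Set G).ncard := (Set.ncard_univ G).symm
        _ ≤ ({x : G | x ∈ US A ∧ x ≠ 1} ∪ {1}).ncard :=
            Set.ncard_le_ncard hcover (Set.toFinite _)
        _ ≤ {x : G | x ∈ US A ∧ x ≠ 1}.ncard + ({1} : Set G).ncard :=
            Set.ncard_union_le _ _
        _ = (n - A.index) + 1 := by rw [hcardA, Set.ncard_singleton]
    omega
  obtain ⟨x, hxU, hx1⟩ := hxex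
  obtain ⟨C, hCx, hC⟩ := exists_maximal_comm (Subgroup.zpowers x) (Subgroup.zpowers_isMulCommutative x)
  have hxC : x ∈ C := hCx (Subgroup.mem_zpowers x)
  obtain ⟨hcardC, hC2, hCi1⟩ := numer C hC ⟨x, hxC, hx1⟩
  -- disjointness of the two unions of conjugates
  have hdisj : Disjoint {z : G | z ∈ US A ∧ z ≠ 1} {z : G | z ∈ US C ∧ z ≠ 1} := by
    rw [Set.disjoint_left]
    rintro z ⟨⟨g, hzg⟩, hz1⟩ ⟨⟨h, hzh⟩, -⟩
    have heq : Subgroup.map (MulAut.conj g).toMonoidHom A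
        = Subgroup.map (MulAut.conj h).toMonoidHom C :=
      maximal_comm_eq_of_mem hcsa (maximal_comm_conj hA g) (maximal_comm_conj hC h) hz1 hzg hzh
    apply hxU
    refine ⟨h⁻¹ * g, ?_⟩
    have : Subgroup.map (MulAut.conj (h⁻¹ * g)).toMonoidHom A
        = Subgroup.map (MulAut.conj h⁻¹).toMonoidHom (Subgroup.map (MulAut.conj h).toMonoidHom C) := by
      rw [← conj_map_conj, heq]
    rw [this, conj_map_conj, inv_mul_cancel, map_conj_one]
    exact hxC
  -- final count
  have hsub : {z : G | z ∈ US A ∧ z ≠ 1} ∪ {z : G | z ∈ US C ∧ z ≠ 1} ⊆ ({1} : Set G)ᶜ := by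
    rintro z (⟨-, hz⟩ | ⟨-, hz⟩) <;> simpa using hz
  have hfin : (n - A.index) + (n - C.index) ≤ n - 1 := by
    calc (n - A.index) + (n - C.index)
        = {z : G | z ∈ US A ∧ z ≠ 1}.ncard + {z : G | z ∈ US C ∧ z ≠ 1}.ncard := by
          rw [hcardA, hcardC]
      _ = ({z : G | z ∈ US A ∧ z ≠ 1} ∪ {z : G | z ∈ US C ∧ z ≠ 1}).ncard :=
          (Set.ncard_union_eq hdisj (Set.toFinite _) (Set.toFinite _)).symm
      _ ≤ (({1} : Set G)ᶜ).ncard := Set.ncard_le_ncard hsub (Set.toFinite _)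
      _ = n - 1 := by
          have := Set.ncard_add_ncard_compl ({1} : Set G)
          rw [Set.ncard_singleton] at this
          omega
    
  omega

end FiniteCase

section Main

variable {G : Type u} [Group G]

/-- A non-abelian CSA group has no commutative subgroup of finite index. -/
lemma not_comm_finiteIndex (hcsa : IsCSA G) (hna : ∃ a b : G, a * b ≠ b * a)
    (B : Subgroup G) (hB : IsMulCommutative B) (hBf : B.FiniteIndex) : False := by
  obtain ⟨a, b, hab⟩ := hna
  obtain ⟨A, hBA, hA⟩ := exists_maximal_comm B hB
  haveI := hBf
  haveI : A.FiniteIndex := Subgroup.finiteIndex_of_le hBA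
  have hAtop : A ≠ ⊤ := by
    intro h
    apply hab
    haveI := hA.prop
    have h1 : a ∈ A := by rw [h]; exact Subgroup.mem_top a
    have h2 : b ∈ A := by rw [h]; exact Subgroup.mem_top b
    exact setLike_mul_comm (s := A) h1 h2
  obtain ⟨g, hg⟩ : ∃ g : G, g ∉ A := by
    by_contra hc
    push_neg at hc
    exact hAtop (Subgroup.eq_top_iff' A |>.mpr hc)
  have hbot := hcsa A hA g hg
  haveI hmapfi : (Subgroup.map (MulAut.conj g).toMonoidHom A).FiniteIndex := by
    constructor
    rw [Subgroup.index_map_of_injective A (MulAut.conj g).injective]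
    rw [MonoidHom.range_eq_top_of_surjective _ (MulAut.conj g).surjective]
    rw [Subgroup.index_top, mul_one]
    exact Subgroup.FiniteIndex.index_ne_zero
  haveI : (A ⊓ Subgroup.map (MulAut.conj g).toMonoidHom A).FiniteIndex := inferInstance
  rw [hbot] at this
  haveI : Finite G := by
    have h0 := this.index_ne_zero
    rw [Subgroup.index_bot] at h0
    exact Nat.finite_of_card_ne_zero h0
  exact hab (finite_csa_comm hcsa a b)

/-- CSA is inherited by subgroups. -/
lemma isCSA_subgroup (hcsa : IsCSA G) (H : Subgroup G) : IsCSA H := by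
  intro A hA g hg
  haveI := hA.prop
  obtain ⟨Abar, hle, hAbar⟩ := exists_maximal_comm (Subgroup.map H.subtype A)
    (Subgroup.map_isMulCommutative A H.subtype)
  have hcomap : Subgroup.comap H.subtype Abar = A := by
    have h1 : A ≤ Subgroup.comap H.subtype Abar := Subgroup.map_le_iff_le_comap.mp hle
    have hcomm : IsMulCommutative (Subgroup.comap H.subtype Abar) := by
      rw [isComm_iff]
      intro x hx y hy
      rw [Subgroup.mem_comap] at hx hy
      haveI := hAbar.prop
      have := setLike_mul_comm (s := Abar) hx hy
      exact Subtype.ext this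
    exact le_antisymm (hA.le_of_ge hcomm h1) h1
  have hgG : (g : G) ∉ Abar := by
    intro hmem
    exact hg (by rw [← hcomap] at *; exact Subgroup.mem_comap.mpr hmem)
  have hbot := hcsa Abar hAbar g hgG
  rw [eq_bot_iff]
  rintro x ⟨hx1, hx2⟩
  have h1 : (x : G) ∈ Abar := hle ⟨x, hx1, rfl⟩
  have h2 : (x : G) ∈ Subgroup.map (MulAut.conj (g : G)).toMonoidHom Abar := by
    obtain ⟨y, hy, hxy⟩ := hx2
    refine ⟨(y : G), hle ⟨y, hy, rfl⟩, ?_⟩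
    have := congrArg H.subtype hxy
    simpa using this
  have hx : (x : G) ∈ Abar ⊓ Subgroup.map (MulAut.conj (g : G)).toMonoidHom Abar := ⟨h1, h2⟩
  rw [hbot, Subgroup.mem_bot] at hx
  rw [Subgroup.mem_bot]
  exact Subtype.ext hx

end Main

/-- Every finite-index subgroup of a non-abelian CSA group is a non-abelian
CSA group; in particular a non-abelian CSA group has no abelian subgroup of
finite index. -/
theorem stmt_4 (G : Type u) [Group G] (hcsa : IsCSA G)
    (hna : ∃ a b : G, a * b ≠ b * a)
    (H : Subgroup G) (hH : H.FiniteIndex) :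
    IsCSA H ∧ ∃ a b : H, a * b ≠ b * a := by
  refine ⟨isCSA_subgroup hcsa H, ?_⟩
  by_contra hc
  push_neg at hc
  have hcomm : IsMulCommutative H := ⟨⟨fun a b => hc a b⟩⟩
  exact not_comm_finiteIndex hcsa hna H hcomm hH
end

section
/- Non-abelian CSA groups are strongly indecomposable: if G is a non-abelian CSA group, then every finite-index subgroup of G is indecomposable. -/
universe u

/-- A group is *indecomposable* if whenever it is isomorphic to a direct
product `A × B` of groups, one of `A` or `B` is trivial. -/
def Indecomposable (G : Type u) [Group G] : Prop :=
  ∀ (A B : Type u) [Group A] [Group B], Nonempty (G ≃* A × B) →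
    Subsingleton A ∨ Subsingleton B

section Aux

open scoped commutatorElement

variable {G : Type u} [Group G]

/-- Every commutative subgroup is contained in a maximal one (Zorn). -/
lemma exists_maximal_abelian (K : Subgroup G) (hK : IsMulCommutative K) :
    ∃ M : Subgroup G, K ≤ M ∧ Maximal (fun K : Subgroup G => IsMulCommutative K) M := by
  have hchain : ∀ c ⊆ {A : Subgroup G | IsMulCommutative A}, IsChain (· ≤ ·) c →
      ∀ y ∈ c, ∃ ub ∈ {A : Subgroup G | IsMulCommutative A}, ∀ z ∈ c, z ≤ ub := by
    intro c hcs hc A hA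
    refine ⟨sSup c, ?_, fun z hz => le_sSup hz⟩
    have hne : c.Nonempty := ⟨A, hA⟩
    have hdir : DirectedOn (· ≤ ·) c := hc.directedOn
    constructor
    constructor
    intro x y
    refine Subtype.ext ?_
    have hx : (x : G) ∈ sSup c := x.2
    have hy : (y : G) ∈ sSup c := y.2
    rw [Subgroup.mem_sSup_of_directedOn hne hdir] at hx hy
    obtain ⟨B₁, hB₁c, hxB₁⟩ := hx
    obtain ⟨B₂, hB₂c, hyB₂⟩ := hy
    push_cast
    rcases hc.total hB₁c hB₂c with h | h
    · haveI : IsMulCommutative B₂ := hcs hB₂c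
      exact Subgroup.mul_comm_of_mem_isMulCommutative (H := B₂) (h hxB₁) hyB₂
    · haveI : IsMulCommutative B₁ := hcs hB₁c
      exact Subgroup.mul_comm_of_mem_isMulCommutative (H := B₁) hxB₁ (h hyB₂)
  obtain ⟨M, hKM, hM⟩ := zorn_le_nonempty₀ {A : Subgroup G | IsMulCommutative A} hchain K hK
  exact ⟨M, hKM, hM⟩

/-- In a CSA group, anything commuting with a nontrivial element of a maximal
abelian subgroup lies in that subgroup. -/
lemma mem_of_commute_max (hcsa : IsCSA G) {M : Subgroup G}
    (hM : Maximal (fun K : Subgroup G => IsMulCommutative K) M) {y : G} (hy : y ≠ 1) (hyM : y ∈ M)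
    {u : G} (huy : u * y = y * u) : u ∈ M := by
  by_contra hu
  have h := hcsa M hM u hu
  have hmem : y ∈ M ⊓ Subgroup.map (MulAut.conj u).toMonoidHom M := by
    refine ⟨hyM, ⟨y, hyM, ?_⟩⟩
    simp only [MulEquiv.coe_toMonoidHom, MulAut.conj_apply]
    rw [huy, mul_inv_cancel_right]
  rw [h] at hmem
  exact hy hmem

/-- Commutation is transitive through nontrivial elements in a CSA group. -/
lemma comm_trans (hcsa : IsCSA G) {x y z : G} (hy : y ≠ 1)
    (hxy : x * y = y * x) (hyz : y * z = z * y) : x * z = z * x := by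
  obtain ⟨M, hle, hM⟩ := exists_maximal_abelian (Subgroup.zpowers y)
    (Subgroup.zpowers_isMulCommutative y)
  have hyM : y ∈ M := hle (Subgroup.mem_zpowers y)
  have hxM : x ∈ M := mem_of_commute_max hcsa hM hy hyM hxy
  have hzM : z ∈ M := mem_of_commute_max hcsa hM hy hyM hyz.symm
  haveI := hM.prop
  exact Subgroup.mul_comm_of_mem_isMulCommutative (H := M) hxM hzM

/-- A CSA group with a commutative finite-index subgroup is abelian. -/
lemma csa_abelian_of_finiteIndex (hcsa : IsCSA G) (H : Subgroup G)
    (hH : H.FiniteIndex) (hab : IsMulCommutative H) : ∀ a b : G, a * b = b * a := by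
  by_cases hfin : Finite G
  · -- finite case: Burnside's normal p-complement theorem
    intro a b
    by_contra hab'
    set c : G := ⁅a, b⁆ with hc
    have hc1 : c ≠ 1 := fun h => hab' (commutatorElement_eq_one_iff_mul_comm.mp h)
    have hn1 : orderOf c ≠ 1 := fun h => hc1 (orderOf_eq_one_iff.mp h)
    obtain ⟨p, hp, hpdvd⟩ := Nat.exists_prime_and_dvd hn1
    haveI : Fact p.Prime := ⟨hp⟩
    have hpG : p ∣ Nat.card G := hpdvd.trans (orderOf_dvd_natCard c)
    obtain ⟨P⟩ : Nonempty (Sylow p G) := inferInstance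
    have hGcard : Nat.card G ≠ 0 := Nat.card_pos.ne'
    haveI : Nontrivial (P : Subgroup G) := by
      rw [← Finite.one_lt_card_iff_nontrivial, Sylow.card_eq_multiplicity]
      exact Nat.one_lt_pow (Nat.Prime.factorization_pos_of_dvd hp hGcard hpG).ne' hp.one_lt
    haveI : Nontrivial (Subgroup.center (P : Subgroup G)) :=
      IsPGroup.center_nontrivial P.2
    obtain ⟨z, hz1⟩ := exists_ne (1 : Subgroup.center (P : Subgroup G))
    set zG : G := ((z : (P : Subgroup G)) : G) with hzG
    have hzG1 : zG ≠ 1 := by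
      intro h
      apply hz1
      have h2 : (z : (P : Subgroup G)) = 1 := Subtype.ext h
      exact Subtype.ext h2
    have hzP : zG ∈ (P : Subgroup G) := (z : (P : Subgroup G)).2
    have hzcomm : ∀ w ∈ (P : Subgroup G), w * zG = zG * w := by
      intro w hw
      have h3 := (Subgroup.mem_center_iff.mp z.2) ⟨w, hw⟩
      exact congrArg Subtype.val h3
    obtain ⟨M, hleM, hM⟩ := exists_maximal_abelian (Subgroup.zpowers zG)
      (Subgroup.zpowers_isMulCommutative zG)
    have hzM : zG ∈ M := hleM (Subgroup.mem_zpowers zG)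
    have hPM : (P : Subgroup G) ≤ M := fun w hw =>
      mem_of_commute_max hcsa hM hzG1 hzM (hzcomm w hw)
    haveI := hM.prop
    have hP : (Subgroup.normalizer ((P : Subgroup G) : Set G)) ≤ Subgroup.centralizer (P : Set G) := by
      intro g hg
      have hgM : g ∈ M := by
        by_contra hgM
        have h := hcsa M hM g hgM
        have hz' : g⁻¹ * zG * g ∈ (P : Subgroup G) := by
          have h4 := (Subgroup.mem_normalizer_iff.mp
            ((Subgroup.normalizer ((P : Subgroup G) : Set G)).inv_mem hg) zG).mp hzP
          rwa [inv_inv] at h4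
        have hmem : zG ∈ M ⊓ Subgroup.map (MulAut.conj g).toMonoidHom M := by
          refine ⟨hzM, ⟨g⁻¹ * zG * g, hPM hz', ?_⟩⟩
          simp only [MulEquiv.coe_toMonoidHom, MulAut.conj_apply]
          group
        rw [h] at hmem
        exact hzG1 hmem
      rw [Subgroup.mem_centralizer_iff]
      intro m hm
      exact Subgroup.mul_comm_of_mem_isMulCommutative (H := M) (hPM hm) hgM
    have hcK : c ∈ (MonoidHom.transferSylow P hP).ker := by
      rw [MonoidHom.mem_ker]
      set f := MonoidHom.transferSylow P hP with hf
      have hcomm : f a * f b = f b * f a := by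
        refine Subtype.ext ?_
        push_cast
        exact Subgroup.mul_comm_of_mem_isMulCommutative (H := M) (hPM (f a).2) (hPM (f b).2)
      rw [hc]
      show f (a * b * a⁻¹ * b⁻¹) = 1
      rw [map_mul, map_mul, map_mul, map_inv, map_inv, hcomm]
      group
    have hdvd : orderOf c ∣ Nat.card (MonoidHom.transferSylow P hP).ker :=
      Subgroup.orderOf_dvd_natCard _ hcK
    exact MonoidHom.not_dvd_card_ker_transferSylow P hP (hpdvd.trans hdvd)
  · -- infinite case
    haveI : Infinite G := not_finite_iff_infinite.mp hfin
    obtain ⟨M, hle, hM⟩ := exists_maximal_abelian H hab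
    have hall : ∀ g : G, g ∈ M := by
      intro g
      by_contra hg
      have h := hcsa M hM g hg
      have hle2 : H ⊓ Subgroup.map (MulAut.conj g).toMonoidHom H ≤ ⊥ := by
        rw [← h]
        exact inf_le_inf hle (Subgroup.map_mono hle)
      have hbot : H ⊓ Subgroup.map (MulAut.conj g).toMonoidHom H = ⊥ := le_bot_iff.mp hle2
      have hmapidx : (Subgroup.map (MulAut.conj g).toMonoidHom H).index = H.index := by
        rw [Subgroup.map_equiv_eq_comap_symm']
        exact Subgroup.index_comap_of_surjective H (MulAut.conj g).symm.surjective
      have hne : (H ⊓ Subgroup.map (MulAut.conj g).toMonoidHom H).index ≠ 0 :=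
        Subgroup.index_inf_ne_zero hH.index_ne_zero (hmapidx ▸ hH.index_ne_zero)
      rw [hbot, Subgroup.index_bot, Nat.card_eq_zero_of_infinite] at hne
      exact hne rfl
    intro a b
    haveI := hM.prop
    exact Subgroup.mul_comm_of_mem_isMulCommutative (H := M) (hall a) (hall b)

end Aux

/-- Non-abelian CSA groups are strongly indecomposable: every finite-index
subgroup is indecomposable. -/
theorem stmt_6 (G : Type u) [Group G] (hcsa : IsCSA G)
    (hna : ∃ a b : G, a * b ≠ b * a)
    (H : Subgroup G) (hH : H.FiniteIndex) :
    Indecomposable H := by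
  intro A B _ _ ⟨e⟩
  by_contra hcon
  rw [not_or, not_subsingleton_iff_nontrivial, not_subsingleton_iff_nontrivial] at hcon
  obtain ⟨hA, hB⟩ := hcon
  obtain ⟨a₀, ha₀⟩ := exists_ne (1 : A)
  obtain ⟨b₀, hb₀⟩ := exists_ne (1 : B)
  -- elements of G corresponding to the two factors
  set U : A → G := fun a => ((e.symm (a, 1) : H) : G) with hU
  set V : B → G := fun b => ((e.symm (1, b) : H) : G) with hV
  have hUV : ∀ a b, U a * V b = V b * U a := by
    intro a b
    have key : e.symm ((a, 1) : A × B) * e.symm ((1, b) : A × B)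
        = e.symm ((1, b) : A × B) * e.symm ((a, 1) : A × B) := by
      rw [← map_mul, ← map_mul]
      congr 1
      simp [Prod.ext_iff]
    have h2 := congrArg (fun h : H => (h : G)) key
    simpa [hU, hV] using h2
  have hU0 : U a₀ ≠ 1 := by
    simp only [hU, ne_eq, OneMemClass.coe_eq_one, EmbeddingLike.map_eq_one_iff,
      Prod.mk_eq_one]
    tauto
  have hV0 : V b₀ ≠ 1 := by
    simp only [hV, ne_eq, OneMemClass.coe_eq_one, EmbeddingLike.map_eq_one_iff,
      Prod.mk_eq_one]
    tauto
  have hUU : ∀ a a' : A, U a * U a' = U a' * U a := fun a a' =>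
    comm_trans hcsa hV0 (hUV a b₀) (hUV a' b₀).symm
  have hVV : ∀ b b' : B, V b * V b' = V b' * V b := fun b b' =>
    comm_trans hcsa hU0 (hUV a₀ b).symm (hUV a₀ b')
  have hsplit : ∀ x : H, (x : G) = U (e x).1 * V (e x).2 := by
    intro x
    have key : x = e.symm (((e x).1, 1) : A × B) * e.symm ((1, (e x).2) : A × B) := by
      rw [← map_mul]
      have h3 : (((e x).1, 1) : A × B) * (1, (e x).2) = e x := by
        simp [Prod.ext_iff]
      rw [h3, MulEquiv.symm_apply_apply]
    conv_lhs => rw [key]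
    push_cast
    rw [hU, hV]
  have habH : IsMulCommutative H := by
    constructor; constructor
    intro x y
    refine Subtype.ext ?_
    push_cast
    rw [hsplit x, hsplit y]
    have c1 : Commute (U (e x).1) (U (e y).1) := hUU _ _
    have c2 : Commute (U (e x).1) (V (e y).2) := hUV _ _
    have c3 : Commute (V (e x).2) (U (e y).1) := (hUV _ _).symm
    have c4 : Commute (V (e x).2) (V (e y).2) := hVV _ _
    exact ((c1.mul_right c2).mul_left (c3.mul_right c4))
  obtain ⟨a, b, hab⟩ := hna
  exact hab (csa_abelian_of_finiteIndex hcsa H hH habH a b)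
end
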